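/- For any d ≥ 0 and any n with 1 ≤ n ≤ 2^d, the tree T̂_d contains a rooted subtree T on exactly n vertices (containing the root of T̂_d) such that all weight can be moved to the root via total acquisition moves; in particular a_t(T) = 1. -/

import Mathlib

/-- A total acquisition move: all the weight of `u` is moved to an adjacent
vertex `v`, provided `v` carries at least as much weight as `u`. -/
def AcqMove {V : Type*} [DecidableEq V] (G : SimpleGraph V) (w w' : V → ℕ) : Prop :=
  ∃ u v, G.Adj u v ∧ 0 < w u ∧ w u ≤ w v ∧
    w' = Function.update (Function.update w v (w v + w u)) u 0

/-- Reachability by a finite sequence of total acquisition moves. -/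
def AcqReach {V : Type*} [DecidableEq V] (G : SimpleGraph V) : (V → ℕ) → (V → ℕ) → Prop :=
  Relation.ReflTransGen (AcqMove G)

/-- No total acquisition move is available from `w`. -/
def AcqMaximal {V : Type*} [DecidableEq V] (G : SimpleGraph V) (w : V → ℕ) : Prop :=
  ∀ w', ¬ AcqMove G w w'

/-- The total acquisition number: minimum number of vertices with positive
weight after a maximal sequence of total acquisition moves starting from the
all-ones weight function. -/
noncomputable def totalAcq {V : Type*} [DecidableEq V] (G : SimpleGraph V) : ℕ :=
  sInf { m | ∃ w, AcqReach G (fun _ => 1) w ∧ AcqMaximal G w ∧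
    m = {v | 0 < w v}.ncard }


/-- The recursively defined rooted tree `T̂_d`, encoded on vertex set
`Finset (Fin d)`: the root is `∅`, and the children of a vertex `s` are the
sets `insert a s` with `a` smaller than every element of `s` (so the parent of
a nonempty vertex `t` is obtained by erasing its minimum).  The root `∅` thus
has children `{0}, {1}, …, {d-1}`, and `{j}` is the root of a copy of `T̂_j`,
exactly as in the recursive definition. -/
def hatT (d : ℕ) : SimpleGraph (Finset (Fin d)) where
  Adj s t :=
    (∃ a ∈ t, s = t.erase a ∧ ∀ b ∈ s, a < b) ∨
    (∃ a ∈ s, t = s.erase a ∧ ∀ b ∈ t, a < b)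
  symm := ⟨fun s t h => Or.symm h⟩
  loopless := by
    constructor
    intro s h
    rcases h with ⟨a, ha, hs, _⟩ | ⟨a, ha, hs, _⟩ <;> rw [hs] at ha <;>
      exact Finset.notMem_erase _ _ ha

/-- The number of vertices of `T̂_i`: the root together with one copy each of
`T̂_0, …, T̂_{i-1}`. -/
def hatTCard : (i : ℕ) → ℕ
  | i => 1 + ∑ j : Fin i, hatTCard j
  decreasing_by exact j.isLt

section Lift
variable {V : Type*} [DecidableEq V] (G : SimpleGraph V) (A B : Set V)
  [DecidablePred (· ∈ A)] (hAB : A ⊆ B)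

lemma acqMove_lift {w w' : A → ℕ} (h : AcqMove (G.induce A) w w') (W : B → ℕ)
    (hW : ∀ (a : V) (ha : a ∈ A), W ⟨a, hAB ha⟩ = w ⟨a, ha⟩) :
    AcqMove (G.induce B) W (fun b => if h : (b : V) ∈ A then w' ⟨b, h⟩ else W b) := by
  obtain ⟨⟨u, huA⟩, ⟨v, hvA⟩, huv, hu, hle, hw'⟩ := h
  have hne : u ≠ v := by
    intro he
    subst he
    exact (G.induce A).irrefl huv
  refine ⟨⟨u, hAB huA⟩, ⟨v, hAB hvA⟩, huv, ?_, ?_, ?_⟩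
  · rw [hW u huA]; exact hu
  · rw [hW u huA, hW v hvA]; exact hle
  · funext b
    obtain ⟨b, hbB⟩ := b
    rw [hw']
    by_cases hbA : b ∈ A
    · rw [dif_pos hbA]
      simp only [Function.update_apply, Subtype.mk.injEq]
      by_cases h1 : b = u
      · subst h1; simp
      · rw [if_neg h1, if_neg h1]
        by_cases h2 : b = v
        · subst h2; rw [if_pos rfl, if_pos rfl, hW u huA, hW b hbA]
        · rw [if_neg h2, if_neg h2, hW b hbA]
    · rw [dif_neg hbA]
      have h1 : b ≠ u := fun h => hbA (h ▸ huA)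
      have h2 : b ≠ v := fun h => hbA (h ▸ hvA)
      simp only [Function.update_apply, Subtype.mk.injEq, if_neg h1, if_neg h2]

lemma acqReach_lift {w w' : A → ℕ} (h : Relation.ReflTransGen (AcqMove (G.induce A)) w w')
    (W : B → ℕ)
    (hW : ∀ (a : V) (ha : a ∈ A), W ⟨a, hAB ha⟩ = w ⟨a, ha⟩) :
    Relation.ReflTransGen (AcqMove (G.induce B)) W
      (fun b => if h : (b : V) ∈ A then w' ⟨b, h⟩ else W b) := by
  induction h with
  | refl =>
    have : (fun b : B => if h : (b : V) ∈ A then w ⟨b, h⟩ else W b) = W := by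
      funext b
      by_cases hbA : (b : V) ∈ A
      · rw [dif_pos hbA, ← hW b hbA]
      · rw [dif_neg hbA]
    rw [this]
  | @tail w₁ w₂ _ hmove ih =>
    refine ih.tail ?_
    have := acqMove_lift G A B hAB hmove
      (fun b => if h : (b : V) ∈ A then w₁ ⟨b, h⟩ else W b)
      (fun a ha => by simp only [dif_pos ha])
    convert this using 2 with b
    by_cases hbA : (b : V) ∈ A
    · simp only [dif_pos hbA]
    · simp only [dif_neg hbA]
end Lift

section Map
variable {V W : Type*} [DecidableEq V] [DecidableEq W] (G : SimpleGraph V) (H : SimpleGraph W)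
  (e : V ≃ W)

lemma acqMove_map (he : ∀ a b, G.Adj a b → H.Adj (e a) (e b)) {w w' : V → ℕ} (h : AcqMove G w w') :
    AcqMove H (w ∘ e.symm) (w' ∘ e.symm) := by
  obtain ⟨u, v, huv, hu, hle, hw'⟩ := h
  refine ⟨e u, e v, he u v huv, by simpa using hu, by simpa using hle, ?_⟩
  funext x
  rw [hw']
  simp only [Function.comp_apply, Function.update_apply, Equiv.symm_apply_apply]
  by_cases h1 : x = e u
  · rw [if_pos h1, if_pos (by rw [h1, Equiv.symm_apply_apply])]
  · rw [if_neg h1, if_neg (by intro hh; exact h1 (by rw [← hh, Equiv.apply_symm_apply]))]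
    by_cases h2 : x = e v
    · rw [if_pos h2, if_pos (by rw [h2, Equiv.symm_apply_apply])]
    · rw [if_neg h2, if_neg (by intro hh; exact h2 (by rw [← hh, Equiv.apply_symm_apply]))]

lemma acqReach_map (he : ∀ a b, G.Adj a b → H.Adj (e a) (e b)) {w w' : V → ℕ} (h : Relation.ReflTransGen (AcqMove G) w w') :
    Relation.ReflTransGen (AcqMove H) (w ∘ e.symm) (w' ∘ e.symm) := by
  induction h with
  | refl => exact Relation.ReflTransGen.refl
  | tail _ hmove ih => exact ih.tail (acqMove_map G H e he hmove)
end Map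

section Sum
variable {V : Type*} [DecidableEq V] [Fintype V] (G : SimpleGraph V)

lemma acqMove_sum {w w' : V → ℕ} (h : AcqMove G w w') : ∑ v, w' v = ∑ v, w v := by
  obtain ⟨u, v, huv, hu, hle, hw'⟩ := h
  have hne : u ≠ v := huv.ne
  rw [hw']
  rw [Finset.sum_update_of_mem (Finset.mem_univ u)]
  have hv : v ∈ Finset.univ \ {u} := by simp [hne.symm]
  rw [Finset.sum_update_of_mem hv]
  rw [← Finset.add_sum_erase _ w (Finset.mem_univ u)]
  have : v ∈ Finset.univ.erase u := by simp [hne.symm]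
  rw [← Finset.add_sum_erase _ w this]
  have hset : (Finset.univ \ {u}) \ {v} = (Finset.univ.erase u).erase v := by
    ext x; simp [Finset.mem_erase, Finset.mem_sdiff, and_comm]
  rw [hset]
  omega

lemma acqReach_sum {w w' : V → ℕ} (h : Relation.ReflTransGen (AcqMove G) w w') :
    ∑ v, w' v = ∑ v, w v := by
  induction h with
  | refl => rfl
  | tail _ hmove ih => rw [acqMove_sum G hmove, ih]
end Sum

def tval {d : ℕ} (s : Finset (Fin d)) : ℕ := ∑ a ∈ s, 2 ^ (a : ℕ)

def tS (d n : ℕ) : Finset (Finset (Fin d)) := Finset.univ.filter fun s => tval s < n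

lemma mem_tS {d n : ℕ} {s : Finset (Fin d)} : s ∈ tS d n ↔ tval s < n := by
  simp [tS]

lemma sum_range_two_pow (k : ℕ) : ∑ i ∈ Finset.range k, 2 ^ i = 2 ^ k - 1 := by
  induction k with
  | zero => rfl
  | succ k ih => rw [Finset.sum_range_succ, ih, pow_succ]; omega

lemma tval_mono {d : ℕ} {s t : Finset (Fin d)} (h : s ⊆ t) : tval s ≤ tval t :=
  Finset.sum_le_sum_of_subset h

lemma tval_lt_pow {d k : ℕ} {s : Finset (Fin d)} (h : ∀ a ∈ s, (a : ℕ) < k) :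
    tval s < 2 ^ k := by
  have h1 : tval s = ∑ i ∈ s.image (Fin.val), 2 ^ i := by
    rw [Finset.sum_image]
    · rfl
    · intro a _ b _ hab; exact Fin.val_injective hab
  have h2 : s.image (Fin.val) ⊆ Finset.range k := by
    intro i hi
    obtain ⟨a, ha, rfl⟩ := Finset.mem_image.mp hi
    exact Finset.mem_range.mpr (h a ha)
  calc tval s ≤ ∑ i ∈ Finset.range k, 2 ^ i := by
        rw [h1]; exact Finset.sum_le_sum_of_subset h2
    _ = 2 ^ k - 1 := sum_range_two_pow k
    _ < 2 ^ k := by have := Nat.one_le_two_pow (n := k); omega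

lemma lt_of_mem_tval_lt {d k : ℕ} {s : Finset (Fin d)} (h : tval s < 2 ^ k)
    {a : Fin d} (ha : a ∈ s) : (a : ℕ) < k := by
  by_contra hk
  push_neg at hk
  have : 2 ^ k ≤ 2 ^ (a : ℕ) := Nat.pow_le_pow_right (by norm_num) hk
  have h2 : 2 ^ (a:ℕ) ≤ tval s :=
    Finset.single_le_sum (f := fun b : Fin d => 2 ^ (b : ℕ)) (fun i _ => Nat.zero_le _) ha
  omega

lemma tval_eq_zero {d : ℕ} {s : Finset (Fin d)} (h : tval s < 1) : s = ∅ := by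
  rw [Finset.eq_empty_iff_forall_notMem]
  intro a ha
  have h0 : tval s < 2 ^ 0 := by simpa using h
  exact absurd (lt_of_mem_tval_lt h0 ha) (by omega)

lemma tval_insert {d : ℕ} {s : Finset (Fin d)} {a : Fin d} (h : a ∉ s) :
    tval (insert a s) = 2 ^ (a : ℕ) + tval s := Finset.sum_insert h

lemma tval_erase_add {d : ℕ} {s : Finset (Fin d)} {a : Fin d} (h : a ∈ s) :
    tval (s.erase a) + 2 ^ (a : ℕ) = tval s := by
  have := Finset.add_sum_erase s (fun a : Fin d => 2 ^ (a : ℕ)) h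
  unfold tval
  omega

lemma tval_singleton {d : ℕ} (a : Fin d) : tval ({a} : Finset (Fin d)) = 2 ^ (a : ℕ) :=
  Finset.sum_singleton _ _

-- membership of κ for "big" elements
lemma kappa_mem {d k : ℕ} (hkd : k < d) {s : Finset (Fin d)} (h1 : tval s < 2 ^ (k + 1))
    (h2 : ¬ tval s < 2 ^ k) : (⟨k, hkd⟩ : Fin d) ∈ s := by
  by_contra hk
  apply h2
  apply tval_lt_pow
  intro a ha
  have := lt_of_mem_tval_lt h1 ha
  have hne : (a : ℕ) ≠ k := by
    intro he
    apply hk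
    have : a = ⟨k, hkd⟩ := Fin.ext he
    exact this ▸ ha
  omega

lemma hatT_adj_insert {d k : ℕ} (hkd : k < d) {s t : Finset (Fin d)}
    (hs : ∀ a ∈ s, (a : ℕ) < k) (ht : ∀ a ∈ t, (a : ℕ) < k) (h : (hatT d).Adj s t) :
    (hatT d).Adj (insert ⟨k, hkd⟩ s) (insert ⟨k, hkd⟩ t) := by
  set κ : Fin d := ⟨k, hkd⟩
  rcases h with ⟨a, hat, hseq, hmin⟩ | ⟨a, has, hteq, hmin⟩
  · left
    have hak : (a : ℕ) < k := ht a hat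
    have hκa : κ ≠ a := by intro he; rw [← he] at hak; exact absurd hak (lt_irrefl k)
    refine ⟨a, Finset.mem_insert_of_mem hat, ?_, ?_⟩
    · rw [hseq, Finset.erase_insert_of_ne hκa]
    · intro b hb
      rcases Finset.mem_insert.mp hb with rfl | hb
      · exact Fin.lt_def.mpr hak
      · exact hmin b hb
  · right
    have hak : (a : ℕ) < k := hs a has
    have hκa : κ ≠ a := by intro he; rw [← he] at hak; exact absurd hak (lt_irrefl k)
    refine ⟨a, Finset.mem_insert_of_mem has, ?_, ?_⟩
    · rw [hteq, Finset.erase_insert_of_ne hκa]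
    · intro b hb
      rcases Finset.mem_insert.mp hb with rfl | hb
      · exact Fin.lt_def.mpr hak
      · exact hmin b hb

lemma two_pow_le_tval {d : ℕ} {s : Finset (Fin d)} {a : Fin d} (ha : a ∈ s) :
    2 ^ (a : ℕ) ≤ tval s :=
  Finset.single_le_sum (f := fun b : Fin d => 2 ^ (b : ℕ)) (fun i _ => Nat.zero_le _) ha

lemma tS_one (d : ℕ) : tS d 1 = {∅} := by
  ext s
  simp only [mem_tS, Finset.mem_singleton]
  constructor
  · exact fun h => tval_eq_zero h
  · rintro rfl; simp [tval]

lemma tS_card (d : ℕ) : ∀ n, 1 ≤ n → n ≤ 2 ^ d → (tS d n).card = n := by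
  intro n
  induction n using Nat.strong_induction_on with
  | _ n ih =>
  intro h1 h2
  rcases eq_or_lt_of_le h1 with h1' | h1'
  · rw [← h1', tS_one]; simp
  -- n ≥ 2
  set k := Nat.log 2 (n - 1) with hk
  have hn1 : n - 1 ≠ 0 := by omega
  have hk1 : 2 ^ k ≤ n - 1 := Nat.pow_log_le_self 2 hn1
  have hk2 : n - 1 < 2 ^ (k + 1) := Nat.lt_pow_succ_log_self (by norm_num) _
  have hkn : 2 ^ k < n := by omega
  have hnk : n ≤ 2 ^ (k + 1) := by omega
  have hkd : k < d := by
    by_contra hkd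
    push_neg at hkd
    have : 2 ^ d ≤ 2 ^ k := Nat.pow_le_pow_right (by norm_num) hkd
    omega
  set κ : Fin d := ⟨k, hkd⟩ with hκ
  have hκval : (κ : ℕ) = k := rfl
  set m := n - 2 ^ k with hm
  have hnm : n = 2 ^ k + m := by omega
  have hm1 : 1 ≤ m := by omega
  have hmk : m ≤ 2 ^ k := by
    have : 2 ^ (k+1) = 2 ^ k + 2 ^ k := by ring
    omega
  have hA : (tS d n).filter (fun s => κ ∉ s) = tS d (2 ^ k) := by
    ext s
    simp only [Finset.mem_filter, mem_tS]
    constructor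
    · rintro ⟨hs, hκs⟩
      by_contra hlt
      exact hκs (kappa_mem hkd (by omega) hlt)
    · intro hs
      refine ⟨by omega, fun hκs => ?_⟩
      have := two_pow_le_tval hκs
      simp only [hκ] at this
      omega
  have hB : ((tS d n).filter (fun s => κ ∈ s)).card = (tS d m).card := by
    refine Finset.card_bij' (fun s _ => s.erase κ) (fun t _ => insert κ t) ?_ ?_ ?_ ?_
    · intro s hs
      simp only [Finset.mem_filter, mem_tS] at hs
      have := tval_erase_add hs.2
      simp only [mem_tS]
      rw [hκval] at this
      omega
    · intro t ht
      simp only [mem_tS] at ht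
      have hκt : κ ∉ t := by
        intro hκt
        have := lt_of_mem_tval_lt (show tval t < 2 ^ k by omega) hκt
        omega
      simp only [Finset.mem_filter, mem_tS]
      have hins : tval (insert κ t) = 2 ^ k + tval t := by
        rw [tval_insert hκt, hκval]
      rw [hins, hnm]
      exact ⟨Nat.add_lt_add_left ht _, Finset.mem_insert_self _ _⟩
    · intro s hs
      simp only [Finset.mem_filter] at hs
      exact Finset.insert_erase hs.2
    · intro t ht
      simp only [mem_tS] at ht
      have hκt : κ ∉ t := by
        intro hκt
        have := lt_of_mem_tval_lt (show tval t < 2 ^ k by omega) hκt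
        omega
      exact Finset.erase_insert hκt
  have hsum := Finset.card_filter_add_card_filter_not (s := tS d n) (p := fun s => κ ∈ s)
  rw [hB] at hsum
  have hAc : (Finset.filter (fun s => ¬ κ ∈ s) (tS d n)).card = 2 ^ k := by
    rw [hA]
    exact ih (2 ^ k) hkn Nat.one_le_two_pow (Nat.pow_le_pow_right (by norm_num) hkd.le)
  have ihm := ih m (by omega) hm1 (le_trans hmk (Nat.pow_le_pow_right (by norm_num) hkd.le))
  omega

lemma notmem_kappa {d k : ℕ} (hkd : k < d) {s : Finset (Fin d)} (h : tval s < 2 ^ k) :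
    (⟨k, hkd⟩ : Fin d) ∉ s := by
  intro hκ
  have := lt_of_mem_tval_lt h hκ
  simp at this


def insEquiv {d : ℕ} (κ : Fin d) (F G : Finset (Finset (Fin d)))
    (h1 : ∀ s ∈ F, insert κ s ∈ G) (h2 : ∀ t ∈ G, t.erase κ ∈ F)
    (h3 : ∀ s ∈ F, κ ∉ s) (h4 : ∀ t ∈ G, κ ∈ t) :
    (↑F : Set (Finset (Fin d))) ≃ (↑G : Set (Finset (Fin d))) where
  toFun s := ⟨insert κ s.1, h1 s.1 (Finset.mem_coe.mp s.2)⟩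
  invFun t := ⟨t.1.erase κ, h2 t.1 (Finset.mem_coe.mp t.2)⟩
  left_inv s := Subtype.ext (Finset.erase_insert (h3 s.1 (Finset.mem_coe.mp s.2)))
  right_inv t := Subtype.ext (Finset.insert_erase (h4 t.1 (Finset.mem_coe.mp t.2)))

@[simp] lemma insEquiv_apply {d : ℕ} (κ : Fin d) (F G : Finset (Finset (Fin d)))
    (h1) (h2) (h3) (h4) (s : (↑F : Set (Finset (Fin d)))) :
    ((insEquiv κ F G h1 h2 h3 h4 s : (↑G : Set (Finset (Fin d)))) : Finset (Fin d))
      = insert κ s.1 := rfl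

@[simp] lemma insEquiv_symm_apply {d : ℕ} (κ : Fin d) (F G : Finset (Finset (Fin d)))
    (h1) (h2) (h3) (h4) (t : (↑G : Set (Finset (Fin d)))) :
    (((insEquiv κ F G h1 h2 h3 h4).symm t : (↑F : Set (Finset (Fin d)))) : Finset (Fin d))
      = t.1.erase κ := rfl

lemma tS_gather (d : ℕ) : ∀ n, 1 ≤ n → n ≤ 2 ^ d →
    Relation.ReflTransGen (AcqMove ((hatT d).induce (↑(tS d n) : Set (Finset (Fin d)))))
      (fun _ => 1)
      (fun v => if (v : Finset (Fin d)) = ∅ then n else 0) := by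
  intro n
  induction n using Nat.strong_induction_on with
  | _ n ih =>
  intro h1 h2
  rcases eq_or_lt_of_le h1 with h1' | h1'
  · subst h1'
    have : (fun v : (↑(tS d 1) : Set (Finset (Fin d))) =>
        if (v : Finset (Fin d)) = ∅ then 1 else 0) = fun _ => (1 : ℕ) := by
      funext v
      have hv : tval (v : Finset (Fin d)) < 1 := by
        have := v.2
        rwa [Finset.mem_coe, mem_tS] at this
      rw [if_pos (tval_eq_zero hv)]
    rw [this]
  -- n ≥ 2
  set k := Nat.log 2 (n - 1) with hk
  have hn1 : n - 1 ≠ 0 := by omega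
  have hk1 : 2 ^ k ≤ n - 1 := Nat.pow_log_le_self 2 hn1
  have hk2 : n - 1 < 2 ^ (k + 1) := Nat.lt_pow_succ_log_self (by norm_num) _
  have hkn : 2 ^ k < n := by omega
  have hnk : n ≤ 2 ^ (k + 1) := by omega
  have hkd : k < d := by
    by_contra hkd
    push_neg at hkd
    have : 2 ^ d ≤ 2 ^ k := Nat.pow_le_pow_right (by norm_num) hkd
    omega
  set κ : Fin d := ⟨k, hkd⟩ with hκ
  have hκval : (κ : ℕ) = k := rfl
  set m := n - 2 ^ k with hm
  have hnm : n = 2 ^ k + m := by omega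
  have hm1 : 1 ≤ m := by omega
  have hmk : m ≤ 2 ^ k := by
    have : 2 ^ (k + 1) = 2 ^ k + 2 ^ k := by ring
    omega
  have h2d : 2 ^ k ≤ 2 ^ d := Nat.pow_le_pow_right (by norm_num) hkd.le
  -- the three vertex sets
  set N : Set (Finset (Fin d)) := ↑(tS d n) with hN
  set A : Set (Finset (Fin d)) := ↑(tS d (2 ^ k)) with hA
  set Bf : Finset (Finset (Fin d)) := (tS d n).filter (fun t => κ ∈ t) with hBf
  set B : Set (Finset (Fin d)) := ↑Bf with hB
  have hmemN : ∀ s : Finset (Fin d), s ∈ N ↔ tval s < n := by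
    intro s; rw [hN, Finset.mem_coe, mem_tS]
  have hmemA : ∀ s : Finset (Fin d), s ∈ A ↔ tval s < 2 ^ k := by
    intro s; rw [hA, Finset.mem_coe, mem_tS]
  have hmemB : ∀ s : Finset (Fin d), s ∈ B ↔ tval s < n ∧ κ ∈ s := by
    intro s; rw [hB, Finset.mem_coe, hBf, Finset.mem_filter, mem_tS]
  have hAN : A ⊆ N := fun s hs => (hmemN s).mpr (lt_trans ((hmemA s).mp hs) hkn)
  have hBN : B ⊆ N := fun s hs => (hmemN s).mpr ((hmemB s).mp hs).1
  -- the equivalence between tS d m and B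
  have hmem_m : ∀ s : Finset (Fin d), s ∈ (↑(tS d m) : Set (Finset (Fin d))) ↔ tval s < m := by
    intro s; rw [Finset.mem_coe, mem_tS]
  have hκnot : ∀ s : Finset (Fin d), tval s < m → κ ∉ s := by
    intro s hs
    exact notmem_kappa hkd (by omega)
  have hval_ins : ∀ s : Finset (Fin d), tval s < m → tval (insert κ s) = 2 ^ k + tval s := by
    intro s hs
    rw [tval_insert (hκnot s hs), hκval]
  have hc1 : ∀ s ∈ tS d m, insert κ s ∈ Bf := by
    intro s hs
    rw [mem_tS] at hs
    rw [hBf, Finset.mem_filter, mem_tS, hval_ins s hs]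
    exact ⟨by omega, Finset.mem_insert_self _ _⟩
  have hc2 : ∀ t ∈ Bf, t.erase κ ∈ tS d m := by
    intro t ht
    rw [hBf, Finset.mem_filter, mem_tS] at ht
    have := tval_erase_add ht.2
    rw [hκval] at this
    rw [mem_tS]
    omega
  have hc3 : ∀ s ∈ tS d m, κ ∉ s := by
    intro s hs
    rw [mem_tS] at hs
    exact hκnot s hs
  have hc4 : ∀ t ∈ Bf, κ ∈ t := by
    intro t ht
    rw [hBf, Finset.mem_filter] at ht
    exact ht.2
  set e := insEquiv κ (tS d m) Bf hc1 hc2 hc3 hc4 with he_def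
  have he : ∀ a b : (↑(tS d m) : Set (Finset (Fin d))),
      ((hatT d).induce _).Adj a b → ((hatT d).induce B).Adj (e a) (e b) := by
    intro a b hab
    have ha := (hmem_m a.1).mp a.2
    have hb := (hmem_m b.1).mp b.2
    have hadj : (hatT d).Adj (insert κ a.1) (insert κ b.1) :=
      hatT_adj_insert hkd
        (fun x hx => lt_of_mem_tval_lt (show tval a.1 < 2 ^ k by omega) hx)
        (fun x hx => lt_of_mem_tval_lt (show tval b.1 < 2 ^ k by omega) hx) hab
    show (hatT d).Adj ((e a : B) : Finset (Fin d)) ((e b : B) : Finset (Fin d))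
    rw [he_def, insEquiv_apply, insEquiv_apply]
    exact hadj
  -- step 1 : gather the B part
  have hreach_m := ih m (by omega) hm1 (by omega)
  have hreach_B := acqReach_map ((hatT d).induce _) ((hatT d).induce B) e he hreach_m
  set targetm : B → ℕ :=
    (fun v : (↑(tS d m) : Set (Finset (Fin d))) =>
      if (v : Finset (Fin d)) = ∅ then m else 0) ∘ e.symm with htargetm
  set P1 : N → ℕ := fun b => if h : (b : Finset (Fin d)) ∈ B then targetm ⟨b, h⟩ else 1 with hP1
  have R1 : Relation.ReflTransGen (AcqMove ((hatT d).induce N)) (fun _ => 1) P1 := by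
    exact acqReach_lift (hatT d) B N hBN hreach_B (fun _ => 1) (fun a ha => rfl)
  -- step 2 : gather the A part
  have hreach_A := ih (2 ^ k) hkn Nat.one_le_two_pow h2d
  have R2 : Relation.ReflTransGen (AcqMove ((hatT d).induce N)) P1
      (fun b => if h : (b : Finset (Fin d)) ∈ A then
        (if ((⟨(b : Finset (Fin d)), h⟩ : A) : Finset (Fin d)) = ∅ then 2 ^ k else 0)
        else P1 b) := by
    refine acqReach_lift (hatT d) A N hAN hreach_A P1 ?_
    intro a ha
    have hκa : a ∉ B := by
      rw [hmemB]
      rintro ⟨-, hκa⟩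
      exact notmem_kappa hkd ((hmemA a).mp ha) hκa
    rw [hP1]
    simp only [dif_neg hκa]
  set P2 : N → ℕ := fun b => if h : (b : Finset (Fin d)) ∈ A then
        (if ((⟨(b : Finset (Fin d)), h⟩ : A) : Finset (Fin d)) = ∅ then 2 ^ k else 0)
        else P1 b with hP2
  -- step 3 : the final move
  have hκS : ({κ} : Finset (Fin d)) ∈ N := by
    rw [hmemN, tval_singleton, hκval]; omega
  have htval_empty : tval (∅ : Finset (Fin d)) = 0 := rfl
  have hES : (∅ : Finset (Fin d)) ∈ N := by
    rw [hmemN]; omega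
  set u : N := ⟨{κ}, hκS⟩ with hu
  set v : N := ⟨∅, hES⟩ with hv
  have hP2u : P2 u = m := by
    rw [hP2]
    have h1 : ({κ} : Finset (Fin d)) ∉ A := by
      rw [hmemA, tval_singleton, hκval]; omega
    have h2 : ({κ} : Finset (Fin d)) ∈ B := by
      rw [hmemB, tval_singleton, hκval]
      exact ⟨hkn, Finset.mem_singleton_self κ⟩
    simp only [dif_neg h1, hP1, dif_pos h2, htargetm, Function.comp_apply, he_def,
      insEquiv_symm_apply, Finset.erase_singleton, if_pos rfl]
    rw [dif_neg (show (u : Finset (Fin d)) ∉ A from h1), dif_pos (show (u : Finset (Fin d)) ∈ B from h2)]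
    exact if_pos (Finset.erase_singleton κ)
  have hP2v : P2 v = 2 ^ k := by
    rw [hP2]
    have h1 : (∅ : Finset (Fin d)) ∈ A := by
      rw [hmemA]
      have := Nat.one_le_two_pow (n := k)
      omega
    simp only [dif_pos h1]
    simp [hv, h1]
  have hP2other : ∀ x : N, (x : Finset (Fin d)) ≠ ∅ → (x : Finset (Fin d)) ≠ {κ} → P2 x = 0 := by
    intro x hx1 hx2
    rw [hP2]
    by_cases hxA : (x : Finset (Fin d)) ∈ A
    · simp only [dif_pos hxA]
      rw [if_neg hx1]
    · simp only [dif_neg hxA, hP1]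
      have hκx : κ ∈ (x : Finset (Fin d)) := by
        apply kappa_mem hkd
        · have := (hmemN _).mp x.2; omega
        · rw [← hmemA]; exact hxA
      have hxB : (x : Finset (Fin d)) ∈ B := (hmemB _).mpr ⟨(hmemN _).mp x.2, hκx⟩
      simp only [dif_pos hxB, htargetm, Function.comp_apply, he_def, insEquiv_symm_apply]
      refine if_neg ?_
      intro hemp
      apply hx2
      have := Finset.insert_erase hκx
      rw [hemp] at this
      simp at this
      exact this.symm
  have hmove : AcqMove ((hatT d).induce N) P2
      (Function.update (Function.update P2 v (P2 v + P2 u)) u 0) := by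
    refine ⟨u, v, ?_, ?_, ?_, rfl⟩
    · show (hatT d).Adj {κ} ∅
      right
      exact ⟨κ, Finset.mem_singleton_self κ, (Finset.erase_singleton κ).symm,
        fun b hb => absurd hb (Finset.notMem_empty b)⟩
    · rw [hP2u]; omega
    · rw [hP2u, hP2v]; omega
  have hfin : (Function.update (Function.update P2 v (P2 v + P2 u)) u 0) =
      (fun x : N => if (x : Finset (Fin d)) = ∅ then n else 0) := by
    funext x
    have hune : ({κ} : Finset (Fin d)) ≠ ∅ := Finset.singleton_ne_empty κ
    by_cases hxu : x = u
    · subst hxu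
      rw [Function.update_apply, if_pos rfl, if_neg]
      rw [hu]
      exact hune
    · rw [Function.update_apply, if_neg hxu, Function.update_apply]
      by_cases hxv : x = v
      · subst hxv
        rw [if_pos rfl, hP2u, hP2v, hv, if_pos rfl]
        omega
      · rw [if_neg hxv]
        have hx1 : (x : Finset (Fin d)) ≠ ∅ := fun h => hxv (Subtype.ext h)
        have hx2 : (x : Finset (Fin d)) ≠ {κ} := fun h => hxu (Subtype.ext h)
        rw [hP2other x hx1 hx2, if_neg hx1]
  exact ((R1.trans R2).tail hmove).trans (by rw [hfin])

theorem hatT_trimmed_subtree' (d n : ℕ) (hn : 1 ≤ n) (hnd : n ≤ 2 ^ d) :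
    ∃ S : Finset (Finset (Fin d)),
      (∅ : Finset (Fin d)) ∈ S ∧
      (∀ s ∈ S, ∀ a ∈ s, (∀ b ∈ s.erase a, a < b) → s.erase a ∈ S) ∧
      S.card = n ∧
      (∃ w : (↑(↑S : Set (Finset (Fin d)))) → ℕ,
        Relation.ReflTransGen (AcqMove ((hatT d).induce (↑S : Set (Finset (Fin d))))) (fun _ => 1) w ∧
        (∀ v : ↑(↑S : Set (Finset (Fin d))), (v : Finset (Fin d)) ≠ ∅ → w v = 0)) ∧
      sInf { m | ∃ w, Relation.ReflTransGen (AcqMove ((hatT d).induce (↑S : Set (Finset (Fin d))))) (fun _ => 1) w ∧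
        (∀ w', ¬ AcqMove ((hatT d).induce (↑S : Set (Finset (Fin d)))) w w') ∧
        m = {v | 0 < w v}.ncard } = 1 := by
  refine ⟨tS d n, ?_, ?_, tS_card d n hn hnd, ?_, ?_⟩
  · rw [mem_tS]
    show tval ∅ < n
    have : tval (∅ : Finset (Fin d)) = 0 := rfl
    omega
  · intro s hs a ha _
    rw [mem_tS] at hs ⊢
    exact lt_of_le_of_lt (tval_mono (Finset.erase_subset a s)) hs
  · exact ⟨fun v => if (v : Finset (Fin d)) = ∅ then n else 0, tS_gather d n hn hnd,
      fun v hv => if_neg hv⟩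
  · set X := (↑(↑(tS d n) : Set (Finset (Fin d)))) with hX
    set G := (hatT d).induce (↑(tS d n) : Set (Finset (Fin d))) with hG
    have hroot : (∅ : Finset (Fin d)) ∈ (↑(tS d n) : Set (Finset (Fin d))) := by
      rw [Finset.mem_coe, mem_tS]
      show tval ∅ < n
      have : tval (∅ : Finset (Fin d)) = 0 := rfl
      omega
    set root : X := ⟨∅, hroot⟩ with hr
    set wfin : X → ℕ := fun v => if (v : Finset (Fin d)) = ∅ then n else 0 with hwfin
    have hmax : ∀ w', ¬ AcqMove G wfin w' := by
      rintro w' ⟨u, v, hadj, hu, hle, -⟩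
      have hu' : (u : Finset (Fin d)) = ∅ := by
        by_contra h
        rw [hwfin] at hu
        simp only [if_neg h] at hu
        exact absurd hu (lt_irrefl 0)
      have hun : wfin u = n := by rw [hwfin]; simp only [if_pos hu']
      by_cases hv' : (v : Finset (Fin d)) = ∅
      · have : u = v := Subtype.ext (hu'.trans hv'.symm)
        rw [this] at hadj
        exact G.irrefl hadj
      · have hvn : wfin v = 0 := by rw [hwfin]; simp only [if_neg hv']
        rw [hun, hvn] at hle
        omega
    have hncard : {x : X | 0 < wfin x}.ncard = 1 := by
      have : {x : X | 0 < wfin x} = {root} := by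
        ext x
        simp only [Set.mem_setOf_eq, Set.mem_singleton_iff, hwfin]
        constructor
        · intro hx
          by_cases h : (x : Finset (Fin d)) = ∅
          · exact Subtype.ext h
          · rw [if_neg h] at hx; exact absurd hx (lt_irrefl 0)
        · rintro rfl
          show 0 < if ((root : X) : Finset (Fin d)) = ∅ then n else 0
          rw [hr, if_pos rfl]
          omega
      rw [this, Set.ncard_singleton]
    have mem1 : 1 ∈ { m | ∃ w, Relation.ReflTransGen (AcqMove G) (fun _ => 1) w ∧
        (∀ w', ¬ AcqMove G w w') ∧ m = {v | 0 < w v}.ncard } :=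
      ⟨wfin, tS_gather d n hn hnd, hmax, hncard.symm⟩
    have lower : ∀ q ∈ { m | ∃ w, Relation.ReflTransGen (AcqMove G) (fun _ => 1) w ∧
        (∀ w', ¬ AcqMove G w w') ∧ m = {v | 0 < w v}.ncard }, 1 ≤ q := by
      rintro q ⟨w, hrw, -, rfl⟩
      have hsum := acqReach_sum G hrw
      have hsum' : ∑ v ∈ (tS d n).attach, w v = (tS d n).card := by simpa using hsum
      have hcard := tS_card d n hn hnd
      have hex : ∃ x : X, 0 < w x := by
        by_contra hno
        push_neg at hno
        have hz : ∑ v ∈ (tS d n).attach, w v = 0 :=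
          Finset.sum_eq_zero (fun x _ => Nat.le_zero.mp (hno x))
        omega
      obtain ⟨x, hx⟩ := hex
      exact (Set.ncard_pos (Set.toFinite _)).mpr ⟨x, hx⟩
    exact le_antisymm (Nat.sInf_le mem1) (le_csInf ⟨1, mem1⟩ lower)

/-- For any `d ≥ 0` and any `n` with `1 ≤ n ≤ 2 ^ d`, the tree `T̂_d` contains
a rooted subtree `T` on exactly `n` vertices (a parent-closed set of vertices
containing the root `∅`) such that all weight can be moved to the root via
total acquisition moves; in particular `a_t(T) = 1`. -/
theorem hatT_trimmed_subtree (d n : ℕ) (hn : 1 ≤ n) (hnd : n ≤ 2 ^ d) :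
    ∃ S : Finset (Finset (Fin d)),
      (∅ : Finset (Fin d)) ∈ S ∧
      (∀ s ∈ S, ∀ a ∈ s, (∀ b ∈ s.erase a, a < b) → s.erase a ∈ S) ∧
      S.card = n ∧
      (∃ w : (↑(↑S : Set (Finset (Fin d)))) → ℕ,
        AcqReach ((hatT d).induce (↑S : Set (Finset (Fin d)))) (fun _ => 1) w ∧
        (∀ v : ↑(↑S : Set (Finset (Fin d))), (v : Finset (Fin d)) ≠ ∅ → w v = 0)) ∧
      totalAcq ((hatT d).induce (↑S : Set (Finset (Fin d)))) = 1 := by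
  obtain ⟨S, h1, h2, h3, h4, h5⟩ := hatT_trimmed_subtree' d n hn hnd
  exact ⟨S, h1, h2, h3, h4, h5⟩
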